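/- Let A ∈ Z^{m×n} be a bimodular matrix of rank m with differing columns whose first column is the standard unit vector e^1. Then for any vector b ∈ Z^{m-1}, the number of integers β such that (β, b) is a column of A is at most 3. -/

import Mathlib

/-- `A` has differing columns: no column is zero and no two columns are equal
or negatives of each other. -/
def DiffCols {m n : ℕ} (A : Matrix (Fin m) (Fin n) ℤ) : Prop :=
  (∀ j, (fun i => A i j) ≠ 0) ∧
  ∀ j j' : Fin n, j ≠ j' →
    (fun i => A i j) ≠ (fun i => A i j') ∧ (fun i => A i j) ≠ (fun i => -A i j')

/-- `A` is `Δ`-modular: every `m × m` minor has absolute value at most `Δ`. -/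
def DMod {m n : ℕ} (A : Matrix (Fin m) (Fin n) ℤ) (Δ : ℤ) : Prop :=
  ∀ g : Fin m → Fin n, |(A.submatrix id g).det| ≤ Δ

open Matrix Submodule in
/-- The ℚ-span of the columns of the lower part of a full-rank integer matrix is everything. -/
lemma aux_span_cols_top {m n : ℕ} (A : Matrix (Fin (m+1)) (Fin (n+1)) ℤ)
    (hrank : A.rank = m+1) :
    Submodule.span ℚ
      (Set.range fun j : Fin (n+1) => fun i : Fin m => (A i.succ j : ℚ)) = ⊤ := by
  classical
  set M : Submodule ℤ (Fin (m+1) → ℤ) := LinearMap.range A.mulVecLin with hMdef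
  have hfr : Module.finrank ℤ M = m + 1 := hrank
  have hlt : Module.rank ℤ M < Cardinal.aleph0 :=
    lt_of_le_of_lt (Submodule.rank_le M) (Module.rank_lt_aleph0 ℤ _)
  have hrk : Module.rank ℤ M = ((m+1 : ℕ) : Cardinal) := by
    have h2 : ((Module.finrank ℤ ↥M : ℕ) : Cardinal) = Module.rank ℤ ↥M :=
      Cardinal.cast_toNat_of_lt_aleph0 hlt
    rw [← h2, hfr]
  obtain ⟨s, hs_card, hs_li⟩ := exists_set_linearIndependent ℤ (↥M)
  have hcard : Cardinal.mk (Fin (m+1)) = Cardinal.mk s := by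
    rw [hs_card, hrk, Cardinal.mk_fin]
  obtain ⟨e⟩ := Cardinal.eq.mp hcard
  set v : Fin (m+1) → (Fin (m+1) → ℤ) := fun k => ((e k : ↥M) : Fin (m+1) → ℤ) with hvdef
  have hv : LinearIndependent ℤ v := by
    have h1 : LinearIndependent ℤ (fun k : Fin (m+1) => (e k : ↥M)) :=
      hs_li.comp e e.injective
    exact h1.map' M.subtype (Submodule.ker_subtype M)
  -- the coordinatewise cast map, as a ℤ-linear map
  set f : (Fin (m+1) → ℤ) →ₗ[ℤ] (Fin (m+1) → ℚ) :=
    LinearMap.compLeft ((Int.castAddHom ℚ).toIntLinearMap) (Fin (m+1)) with hfdef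
  have hfapp : ∀ (x : Fin (m+1) → ℤ) (i : Fin (m+1)), f x i = (x i : ℚ) := fun _ _ => rfl
  have hfinj : Function.Injective f := fun x y hxy =>
    funext fun i => Int.cast_injective (congrFun hxy i)
  have hw : LinearIndependent ℤ (⇑f ∘ v) := hv.map' f (LinearMap.ker_eq_bot.mpr hfinj)
  have hwq : LinearIndependent ℚ (⇑f ∘ v) := (LinearIndependent.iff_fractionRing ℤ ℚ).mp hw
  have hcardfin : Fintype.card (Fin (m+1)) = Module.finrank ℚ (Fin (m+1) → ℚ) := by
    simp [Module.finrank_fin_fun]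
  have hspan_w : Submodule.span ℚ (Set.range (⇑f ∘ v)) = ⊤ := by
    let B := basisOfLinearIndependentOfCardEqFinrank hwq hcardfin
    have hB : ⇑B = ⇑f ∘ v := coe_basisOfLinearIndependentOfCardEqFinrank _ _
    rw [← hB, B.span_eq]
  -- every `f (v k)` lies in the ℚ-span of the (full) columns of `A`
  set colsq : Fin (n+1) → (Fin (m+1) → ℚ) := fun j => fun i => (A i j : ℚ) with hcolsq
  have hcols : ∀ k, f (v k) ∈ Submodule.span ℚ (Set.range colsq) := by
    intro k
    have hvk : v k ∈ M := (e k : ↥M).2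
    rw [hMdef, Matrix.range_mulVecLin] at hvk
    have h2 : f (v k) ∈ Submodule.map f (Submodule.span ℤ (Set.range Aᵀ)) :=
      Submodule.mem_map_of_mem hvk
    rw [Submodule.map_span] at h2
    have h3 : f (v k) ∈ Submodule.span ℤ (Set.range colsq) := by
      have him : ⇑f '' Set.range Aᵀ = Set.range colsq := by
        exact (Set.range_comp (⇑f) (Aᵀ : Fin (n+1) → Fin (m+1) → ℤ)).symm
      rwa [him] at h2
    exact Submodule.span_subset_span ℤ ℚ _ h3
  have htopfull : Submodule.span ℚ (Set.range colsq) = ⊤ := by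
    rw [eq_top_iff, ← hspan_w, Submodule.span_le]
    rintro x ⟨k, rfl⟩
    exact hcols k
  -- project away the first coordinate
  set π : (Fin (m+1) → ℚ) →ₗ[ℚ] (Fin m → ℚ) :=
    LinearMap.funLeft ℚ ℚ (Fin.succ : Fin m → Fin (m+1)) with hπ
  have hπsurj : Function.Surjective π :=
    LinearMap.funLeft_surjective_of_injective ℚ ℚ _ (Fin.succ_injective m)
  have hrange : (Set.range fun j : Fin (n+1) => fun i : Fin m => (A i.succ j : ℚ))
      = ⇑π '' Set.range colsq := by
    rw [← Set.range_comp]; rfl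
  rw [hrange, Submodule.span_image, htopfull, Submodule.map_top]
  exact LinearMap.range_eq_top.mpr hπsurj

open Matrix Module in
/-- A nonsingular `m × m` minor of the lower part whose first column is a prescribed column. -/
lemma aux_exists_good_minor {m n : ℕ} [NeZero m] (A : Matrix (Fin (m+1)) (Fin (n+1)) ℤ)
    (hrank : A.rank = m+1) (j0 : Fin (n+1)) (hb : (fun i : Fin m => A i.succ j0) ≠ 0) :
    ∃ h : Fin m → Fin (n+1), h 0 = j0 ∧ (A.submatrix Fin.succ h).det ≠ 0 := by
  classical
  set col : Fin (n+1) → (Fin m → ℚ) := fun j => fun i => (A i.succ j : ℚ) with hcol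
  have htop : Submodule.span ℚ (Set.range col) = ⊤ := aux_span_cols_top A hrank
  set bq : Fin m → ℚ := col j0 with hbq'
  have hbq : bq ≠ 0 := by
    intro h0
    apply hb
    funext i
    have h1 : (A i.succ j0 : ℚ) = 0 := congrFun h0 i
    exact_mod_cast h1
  have hs : LinearIndepOn ℚ id ({bq} : Set (Fin m → ℚ)) :=
    (linearIndepOn_singleton_iff ℚ).mpr hbq
  have hst : ({bq} : Set (Fin m → ℚ)) ⊆ Set.range col := by
    rw [Set.singleton_subset_iff]
    exact ⟨j0, rfl⟩
  have htle : ⊤ ≤ Submodule.span ℚ (Set.range col) := htop.ge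
  let B := Basis.extendLe hs hst htle
  haveI : Fintype (hs.extend hst) := FiniteDimensional.fintypeBasisIndex B
  have hcard : Fintype.card (hs.extend hst) = m := by
    have h1 := Module.finrank_eq_card_basis B
    rw [Module.finrank_fin_fun] at h1
    omega
  let e0 : hs.extend hst ≃ Fin m := Fintype.equivFinOfCardEq hcard
  let x0 : hs.extend hst := ⟨bq, hs.subset_extend hst rfl⟩
  let e : Fin m ≃ hs.extend hst := (Equiv.swap 0 (e0 x0)).trans e0.symm
  have he0 : e 0 = x0 := by
    show e0.symm (Equiv.swap 0 (e0 x0) 0) = x0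
    rw [Equiv.swap_apply_left, Equiv.symm_apply_apply]
  have hmem : ∀ k : Fin m, ((e k : hs.extend hst) : Fin m → ℚ) ∈ Set.range col :=
    fun k => hs.extend_subset hst (e k).2
  choose g hg using hmem
  set h : Fin m → Fin (n+1) := Function.update g 0 j0 with hhdef
  have hcolh : ∀ k, col (h k) = ((e k : hs.extend hst) : Fin m → ℚ) := by
    intro k
    by_cases hk : k = 0
    · subst hk
      rw [hhdef]
      simp only [Function.update_self]
      rw [he0]
    · rw [hhdef]
      simp only [Function.update_of_ne hk]
      exact hg k
  let B' : Basis (Fin m) ℚ (Fin m → ℚ) := B.reindex e.symm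
  have hB' : ∀ k, B' k = ((e k : hs.extend hst) : Fin m → ℚ) := by
    intro k
    simp only [B', Module.Basis.reindex_apply, Equiv.symm_symm]
    exact Basis.extendLe_apply_self hs hst htle (e k)
  haveI := Basis.invertibleToMatrix (Pi.basisFun ℚ (Fin m)) B'
  have hdetq : ((Pi.basisFun ℚ (Fin m)).toMatrix ⇑B').det ≠ 0 :=
    (Matrix.isUnit_det_of_invertible _).ne_zero
  have hmat : (Pi.basisFun ℚ (Fin m)).toMatrix ⇑B'
      = (A.submatrix Fin.succ h).map (fun z : ℤ => (z : ℚ)) := by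
    ext i k
    rw [Matrix.map_apply, Matrix.submatrix_apply, Basis.toMatrix_apply, Pi.basisFun_repr, hB' k,
      ← hcolh k]
  refine ⟨h, by simp [hhdef], ?_⟩
  intro hdet0
  apply hdetq
  rw [hmat]
  have hEq : ((A.submatrix Fin.succ h).map fun z : ℤ => (z : ℚ))
      = (Int.castRingHom ℚ).mapMatrix (A.submatrix Fin.succ h) := rfl
  rw [hEq, ← RingHom.map_det, hdet0, map_zero]

open Matrix in
/-- A nonsingular `m × m` minor of the lower part (no pinning). -/
lemma aux_exists_minor {m n : ℕ} (A : Matrix (Fin (m+1)) (Fin (n+1)) ℤ)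
    (hrank : A.rank = m+1) :
    ∃ h : Fin m → Fin (n+1), (A.submatrix Fin.succ h).det ≠ 0 := by
  rcases Nat.eq_zero_or_pos m with hm | hm
  · subst hm
    exact ⟨Fin.elim0, by simp [Matrix.det_fin_zero]⟩
  · haveI : NeZero m := ⟨hm.ne'⟩
    have htop := aux_span_cols_top A hrank
    have hex : ∃ j0 : Fin (n+1), (fun i : Fin m => A i.succ j0) ≠ 0 := by
      by_contra hall
      push_neg at hall
      have hle : Submodule.span ℚ
          (Set.range fun j : Fin (n+1) => fun i : Fin m => (A i.succ j : ℚ))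
          ≤ (⊥ : Submodule ℚ (Fin m → ℚ)) := by
        rw [Submodule.span_le]
        rintro x ⟨j, rfl⟩
        simp only [SetLike.mem_coe, Submodule.mem_bot]
        funext i
        have h1 : A i.succ j = 0 := congrFun (hall j) i
        simp [h1]
      rw [htop] at hle
      have h1 : (1 : Fin m → ℚ) ∈ (⊥ : Submodule ℚ (Fin m → ℚ)) := hle Submodule.mem_top
      rw [Submodule.mem_bot] at h1
      have h2 : (1 : ℚ) = 0 := congrFun h1 ⟨0, hm⟩
      norm_num at h2
    obtain ⟨j0, hj0⟩ := hex
    obtain ⟨h, _, hdet⟩ := aux_exists_good_minor A hrank j0 hj0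
    exact ⟨h, hdet⟩

open Matrix in
/-- Determinant expansion when the first column is `β • e₁`. -/
lemma aux_det_cons_zero {m : ℕ} (C : Matrix (Fin (m+1)) (Fin (m+1)) ℤ) (β : ℤ)
    (hc : ∀ i, C i 0 = (Fin.cons β (0 : Fin m → ℤ) : Fin (m+1) → ℤ) i) :
    C.det = β * (C.submatrix Fin.succ Fin.succ).det := by
  rw [Matrix.det_succ_column_zero]
  rw [Finset.sum_eq_single (0 : Fin (m+1))]
  · rw [hc 0]
    simp only [Fin.cons_zero, Fin.val_zero, pow_zero, one_mul]
    rw [Fin.succAbove_zero]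
  · intro i _ hi
    obtain ⟨k, rfl⟩ := Fin.eq_succ_of_ne_zero hi
    rw [hc k.succ]
    simp [Fin.cons_succ]
  · intro habs
    exact absurd (Finset.mem_univ _) habs

theorem stmt2 {m n : ℕ} (A : Matrix (Fin (m+1)) (Fin (n+1)) ℤ)
    (hrank : A.rank = m+1) (hmod : DMod A 2) (hdiff : DiffCols A)
    (hfirst : (fun i => A i 0) = Pi.single 0 1)
    (b : Fin m → ℤ) :
    {β : ℤ | ∃ j, (fun i => A i j) = Fin.cons β b}.ncard ≤ 3 := by
  classical
  set S := {β : ℤ | ∃ j, (fun i => A i j) = Fin.cons β b} with hSdef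
  by_cases hb : b = 0
  · -- b = 0 : S ⊆ {1, 2, -2}
    subst hb
    have hsub : S ⊆ ({1, 2, -2} : Set ℤ) := by
      rintro β ⟨j, hj⟩
      obtain ⟨h, hdet⟩ := aux_exists_minor A hrank
      set C := A.submatrix id (Fin.cons j h) with hC
      have hcolC : ∀ i, C i 0 = (Fin.cons β (0 : Fin m → ℤ) : Fin (m+1) → ℤ) i := by
        intro i
        rw [hC, Matrix.submatrix_apply, Fin.cons_zero, id_eq]
        exact congrFun hj i
      have hdC : C.det = β * (C.submatrix Fin.succ Fin.succ).det :=
        aux_det_cons_zero C β hcolC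
      have hsub2 : C.submatrix Fin.succ Fin.succ = A.submatrix Fin.succ h := by
        ext i k
        simp [hC, Fin.cons_succ]
      have hbound : |C.det| ≤ 2 := hmod (Fin.cons j h)
      have h1le : (1 : ℤ) ≤ |(A.submatrix Fin.succ h).det| := Int.one_le_abs hdet
      have h2 : |β| ≤ 2 := by
        rw [hdC, hsub2, abs_mul] at hbound
        nlinarith [abs_nonneg β, abs_nonneg (A.submatrix Fin.succ h).det]
      have hb0 : β ≠ 0 := by
        rintro rfl
        apply hdiff.1 j
        rw [hj]
        exact Matrix.cons_zero_zero
      have hbm1 : β ≠ -1 := by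
        rintro rfl
        by_cases hj0 : j = 0
        · subst hj0
          rw [hfirst] at hj
          have h3 : (Pi.single (0 : Fin (m+1)) (1 : ℤ) : Fin (m+1) → ℤ) 0
              = (Fin.cons (-1 : ℤ) 0 : Fin (m+1) → ℤ) 0 := congrFun hj 0
          rw [Fin.cons_zero, Pi.single_eq_same] at h3
          norm_num at h3
        · apply (hdiff.2 j 0 hj0).2
          rw [hj]
          funext i
          have h4 := congrFun hfirst i
          rw [h4]
          clear h4
          induction i using Fin.cases with
          | zero => simp
          | succ k => simp [Pi.single_eq_of_ne (Fin.succ_ne_zero k)]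
      rw [abs_le] at h2
      simp only [Set.mem_insert_iff, Set.mem_singleton_iff]
      omega
    calc S.ncard ≤ ({1, 2, -2} : Set ℤ).ncard :=
          Set.ncard_le_ncard hsub (Set.toFinite _)
      _ ≤ ({2, -2} : Set ℤ).ncard + 1 := Set.ncard_insert_le _ _
      _ ≤ (({-2} : Set ℤ).ncard + 1) + 1 := by
          have := Set.ncard_insert_le (2 : ℤ) ({-2} : Set ℤ)
          omega
      _ ≤ 3 := by rw [Set.ncard_singleton]
  · -- b ≠ 0 : pairwise differences are at most 2
    haveI : NeZero m := ⟨fun hm => hb (by subst hm; funext i; exact i.elim0)⟩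
    have key : ∀ β1 ∈ S, ∀ β2 ∈ S, |β1 - β2| ≤ 2 := by
      rintro β1 ⟨j1, hj1⟩ β2 ⟨j2, hj2⟩
      have hbj2 : (fun i : Fin m => A i.succ j2) = b := by
        funext i
        have h1 : A i.succ j2 = (Fin.cons β2 b : Fin (m+1) → ℤ) i.succ := congrFun hj2 i.succ
        rwa [Fin.cons_succ] at h1
      have hbne : (fun i : Fin m => A i.succ j2) ≠ 0 := by rw [hbj2]; exact hb
      obtain ⟨h, hh0, hdet⟩ := aux_exists_good_minor A hrank j2 hbne
      set C := A.submatrix id (Fin.cons j1 h) with hC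
      set D := C.updateCol 0 (fun k => C k 0 + (-1 : ℤ) • C k (Fin.succ 0)) with hD
      have hdCD : D.det = C.det :=
        Matrix.det_updateCol_add_smul_self C (Fin.succ_ne_zero (0 : Fin m)).symm (-1)
      have hcolD : ∀ i, D i 0 = (Fin.cons (β1 - β2) (0 : Fin m → ℤ) : Fin (m+1) → ℤ) i := by
        intro i
        rw [hD, Matrix.updateCol_self]
        have h1 : C i 0 = (Fin.cons β1 b : Fin (m+1) → ℤ) i := by
          rw [hC, Matrix.submatrix_apply, Fin.cons_zero, id_eq]
          exact congrFun hj1 i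
        have h2 : C i (Fin.succ 0) = (Fin.cons β2 b : Fin (m+1) → ℤ) i := by
          rw [hC, Matrix.submatrix_apply, Fin.cons_succ, hh0, id_eq]
          exact congrFun hj2 i
        rw [h1, h2]
        clear h1 h2
        induction i using Fin.cases with
        | zero => simp [Fin.cons_zero]; ring
        | succ k => simp [Fin.cons_succ]
      have hdD : D.det = (β1 - β2) * (D.submatrix Fin.succ Fin.succ).det :=
        aux_det_cons_zero D (β1 - β2) hcolD
      have hsubD : D.submatrix Fin.succ Fin.succ = A.submatrix Fin.succ h := by
        ext i k
        simp only [Matrix.submatrix_apply]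
        rw [hD, Matrix.updateCol_ne (Fin.succ_ne_zero k)]
        simp [hC, Fin.cons_succ]
      have hbound : |C.det| ≤ 2 := hmod (Fin.cons j1 h)
      have h1le : (1 : ℤ) ≤ |(A.submatrix Fin.succ h).det| := Int.one_le_abs hdet
      calc |β1 - β2| ≤ |β1 - β2| * |(A.submatrix Fin.succ h).det| :=
            le_mul_of_one_le_right (abs_nonneg _) h1le
        _ = |C.det| := by rw [← abs_mul, ← hsubD, ← hdD, hdCD]
        _ ≤ 2 := hbound
    rcases Set.eq_empty_or_nonempty S with hSe | ⟨β0, hβ0⟩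
    · simp [hSe]
    · have hsub5 : S ⊆ Set.Icc (β0 - 2) (β0 + 2) := by
        intro β hβ
        have h1 := key β hβ β0 hβ0
        rw [abs_le] at h1
        rw [Set.mem_Icc]
        omega
      have hfin : S.Finite := (Set.finite_Icc _ _).subset hsub5
      have hne : hfin.toFinset.Nonempty := ⟨β0, hfin.mem_toFinset.mpr hβ0⟩
      set a := hfin.toFinset.min' hne with ha
      have haS : a ∈ S := hfin.mem_toFinset.mp (hfin.toFinset.min'_mem hne)
      have hsub3 : S ⊆ Set.Icc a (a + 2) := by
        intro β hβ
        have h1 : a ≤ β := hfin.toFinset.min'_le β (hfin.mem_toFinset.mpr hβ)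
        have h2 := key β hβ a haS
        rw [abs_le] at h2
        rw [Set.mem_Icc]
        omega
      calc S.ncard ≤ (Set.Icc a (a + 2)).ncard :=
            Set.ncard_le_ncard hsub3 (Set.finite_Icc _ _)
        _ = 3 := by
            rw [← Finset.coe_Icc, Set.ncard_coe_finset, Int.card_Icc]
            omega
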